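/- Let R = ⊕_{n≥0} R_n be an N-graded ring that is NI and such that J(R) ∩ R_0 is a nil ideal. Then R is NJ, i.e., J(R) = N(R). -/

import Mathlib

/-- The set of nilpotent elements of `R`. -/
def nilSet (R : Type*) [Ring R] : Set R := {x | IsNilpotent x}

/-- A two-sided ideal is nil if all its elements are nilpotent. -/
def TwoSidedIdeal.IsNil {R : Type*} [Ring R] (I : TwoSidedIdeal R) : Prop :=
  ∀ x ∈ I, IsNilpotent x

/-- The upper nilradical of `R`: the sum of all nil two-sided ideals. -/
def upperNilradical (R : Type*) [Ring R] : TwoSidedIdeal R :=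
  sSup {I : TwoSidedIdeal R | I.IsNil}

/-- `R` is an NI ring if its set of nilpotent elements equals its upper nilradical. -/
def IsNIRing (R : Type*) [Ring R] : Prop :=
  (upperNilradical R : Set R) = nilSet R

/-- The Jacobson radical of the ring `R` (intersection of all maximal left ideals). -/
def jacobsonRad (R : Type*) [Ring R] : Ideal R := (⊥ : Ideal R).jacobson

section Aux

variable {R : Type*} [Ring R]

lemma isNilpotent_of_sq {x : R} (h : IsNilpotent (x * x)) : IsNilpotent x := by
  obtain ⟨k, hk⟩ := h
  exact ⟨2 * k, by rw [pow_mul, pow_two]; exact hk⟩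

lemma mem_uN_iff (hNI : IsNIRing R) (x : R) : x ∈ upperNilradical R ↔ IsNilpotent x := by
  rw [← SetLike.mem_coe, hNI]; rfl

lemma nilpotent_mem_jacobson (hNI : IsNIRing R) {x : R} (hx : IsNilpotent x) :
    x ∈ jacobsonRad R := by
  have : x ∈ ((⊥ : Ideal R).jacobson) := by
    rw [Ideal.mem_jacobson_iff]
    intro y
    have hyx : IsNilpotent (y * x) := by
      rw [← mem_uN_iff hNI]
      exact (upperNilradical R).mul_mem_left y x ((mem_uN_iff hNI x).2 hx)
    obtain ⟨w, hw⟩ := hyx.isUnit_add_one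
    refine ⟨↑w⁻¹, ?_⟩
    rw [Ideal.mem_bot]
    have h1 : (↑w⁻¹ : R) * (y * x + 1) = 1 := by rw [← hw]; exact w.inv_mul
    have h2 : (↑w⁻¹ : R) * y * x + ↑w⁻¹ - 1 = ↑w⁻¹ * (y * x + 1) - 1 := by noncomm_ring
    rw [h1, sub_self] at h2
    exact h2
  exact this

/-- Elements of the Jacobson radical have a left quasi-inverse. -/
lemma exists_left_inv_one_sub {b : R} (hb : b ∈ jacobsonRad R) :
    ∃ z : R, z * (1 - b) = 1 := by
  have hb' : b ∈ ((⊥ : Ideal R).jacobson) := hb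
  obtain ⟨z, hz⟩ := Ideal.mem_jacobson_iff.mp hb' (-1)
  rw [Ideal.mem_bot] at hz
  refine ⟨z, ?_⟩
  have h2 : z * (1 - b) - 1 = z * -1 * b + z - 1 := by noncomm_ring
  rw [hz] at h2
  exact sub_eq_zero.mp h2

/-- `1 - b` is a (two-sided) unit for `b` in the Jacobson radical. -/
lemma isUnit_one_sub_of_mem_jacobson {b : R} (hb : b ∈ jacobsonRad R) :
    IsUnit (1 - b) := by
  obtain ⟨z, hz⟩ := exists_left_inv_one_sub hb
  have hzbJ : -(z * b) ∈ jacobsonRad R := neg_mem (Ideal.mul_mem_left _ z hb)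
  obtain ⟨w, hw⟩ := exists_left_inv_one_sub hzbJ
  have hzeq : 1 - -(z * b) = z := by
    have h2 : z - z * b = 1 := by rw [← hz]; noncomm_ring
    rw [sub_neg_eq_add]
    exact (eq_add_of_sub_eq h2).symm
  rw [hzeq] at hw
  have hweq : w = 1 - b := by
    calc w = w * (z * (1 - b)) := by rw [hz, mul_one]
    _ = w * z * (1 - b) := by rw [mul_assoc]
    _ = 1 - b := by rw [hw, one_mul]
  refine ⟨⟨1 - b, z, ?_, hz⟩, rfl⟩
  rw [← hweq]
  exact hw

variable (𝒜 : ℕ → AddSubgroup R) [GradedRing 𝒜]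

open DirectSum

/-- Key lemma: for `a` in the Jacobson radical with components supported in degrees `≤ m`,
`m ≥ 1`, the top component `aₘ` lies in the upper nilradical. -/
lemma crux (hNI : IsNIRing R) {a : R} (ha : a ∈ jacobsonRad R) (m : ℕ) (hm : 1 ≤ m)
    (hsupp : ∀ j, m < j → decompose 𝒜 a j = 0) :
    (decompose 𝒜 a m : R) ∈ upperNilradical R := by
  classical
  set N := upperNilradical R with hNdef
  set am : R := (decompose 𝒜 a m : R) with ham
  -- `1 - a` is a unit
  obtain ⟨u, hu⟩ := isUnit_one_sub_of_mem_jacobson ha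
  set v : R := ↑u⁻¹ with hvdef
  have hv1 : (1 - a) * v = 1 := by rw [← hu]; exact u.mul_inv
  have hveq : v = 1 + a * v := by
    have h2 : v - a * v = 1 := by
      have h3 : (1 - a) * v = v - a * v := by rw [sub_mul, one_mul]
      rw [← h3]; exact hv1
    exact sub_eq_iff_eq_add.mp h2
  -- product components
  have hmul : ∀ n : ℕ, (decompose 𝒜 (a * v) n : R) =
      ∑ ij ∈ ((decompose 𝒜 a).support ×ˢ (decompose 𝒜 v).support).filter
        (fun ij : ℕ × ℕ => ij.1 + ij.2 = n),
        (decompose 𝒜 a ij.1 : R) * (decompose 𝒜 v ij.2 : R) := by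
    intro n
    rw [DirectSum.decompose_mul, DirectSum.coe_mul_apply]
  -- component equation of `v = 1 + a * v`
  have hone : decompose 𝒜 (1 : R) =
      DirectSum.of (fun i => (𝒜 i : AddSubgroup R)) 0 ⟨1, SetLike.one_mem_graded 𝒜⟩ :=
    DirectSum.decompose_coe 𝒜 (⟨1, SetLike.one_mem_graded 𝒜⟩ : 𝒜 0)
  have hcomp : ∀ n : ℕ, 1 ≤ n → (decompose 𝒜 v n : R) = (decompose 𝒜 (a * v) n : R) := by
    intro n hn
    conv_lhs => rw [hveq]
    rw [DirectSum.decompose_add, DirectSum.add_apply, hone,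
      DirectSum.of_eq_of_ne _ _ _ (by omega)]
    push_cast
    rw [zero_add]
  -- bound for the support of `v`
  set t : ℕ := (decompose 𝒜 v).support.sup id with htdef
  have hvt : ∀ j, t < j → decompose 𝒜 v j = 0 := by
    intro j hj
    by_contra h
    have hmem : j ∈ (decompose 𝒜 v).support := DFinsupp.mem_support_iff.mpr h
    have := Finset.le_sup (f := id) hmem
    simp only [id] at this
    omega
  -- swapping lemma, using that `R/N` is reduced
  have hswap : ∀ x : R, am * x * am ∈ N → x * am ∈ N := by
    intro x hx
    rw [mem_uN_iff hNI]
    apply isNilpotent_of_sq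
    have heq : (x * am) * (x * am) = x * (am * x * am) := by noncomm_ring
    rw [heq, ← mem_uN_iff hNI]
    exact N.mul_mem_left x _ hx
  -- downward induction on the components of `v`
  have key : ∀ k : ℕ, ∀ n : ℕ, t < n + k → (decompose 𝒜 v n : R) * am ∈ N := by
    intro k
    induction k with
    | zero =>
      intro n hn
      rw [hvt n (by omega)]
      simp only [ZeroMemClass.coe_zero, zero_mul]
      exact N.zero_mem
    | succ k ih =>
      intro n hn
      have hup : ∀ j, n < j → (decompose 𝒜 v j : R) * am ∈ N := fun j hj => ih j (by omega)
      apply hswap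
      have hcn := hcomp (n + m) (by omega)
      rw [hmul] at hcn
      set P := ((decompose 𝒜 a).support ×ˢ (decompose 𝒜 v).support).filter
        (fun ij : ℕ × ℕ => ij.1 + ij.2 = n + m) with hPdef
      by_cases hmem : (m, n) ∈ P
      · rw [← Finset.add_sum_erase _ _ hmem] at hcn
        have hrearr : am * (decompose 𝒜 v n : R) =
            (decompose 𝒜 v (n + m) : R) -
              ∑ ij ∈ P.erase (m, n), (decompose 𝒜 a ij.1 : R) * (decompose 𝒜 v ij.2 : R) :=
          eq_sub_of_add_eq hcn.symm
        rw [hrearr, sub_mul]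
        apply N.sub_mem
        · exact hup (n + m) (by omega)
        · rw [Finset.sum_mul]
          apply sum_mem
          intro ij hij
          have hij' := Finset.mem_of_mem_erase hij
          rw [hPdef, Finset.mem_filter, Finset.mem_product] at hij'
          have hne : ij ≠ (m, n) := Finset.ne_of_mem_erase hij
          have hi_le : ij.1 ≤ m := by
            by_contra hc
            have h0 := hsupp ij.1 (by omega)
            rw [DFinsupp.mem_support_iff] at hij'
            exact hij'.1.1 h0
          have hj_gt : n < ij.2 := by
            rcases hij' with ⟨_, hsum⟩
            rcases Nat.lt_or_ge n ij.2 with h | h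
            · exact h
            · exfalso
              have h2 : ij.2 = n := by omega
              have h1 : ij.1 = m := by omega
              exact hne (Prod.ext h1 h2)
          rw [mul_assoc]
          exact N.mul_mem_left _ _ (hup ij.2 hj_gt)
      · have hzero : (decompose 𝒜 a m : R) = 0 ∨ (decompose 𝒜 v n : R) = 0 := by
          rw [hPdef, Finset.mem_filter, Finset.mem_product] at hmem
          push_neg at hmem
          rcases Decidable.em (m ∈ (decompose 𝒜 a).support) with hma | hma
          · rcases Decidable.em (n ∈ (decompose 𝒜 v).support) with hnv | hnv
            · exact absurd (by omega) (hmem ⟨hma, hnv⟩)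
            · right
              rw [DFinsupp.notMem_support_iff] at hnv
              rw [hnv]; rfl
          · left
            rw [DFinsupp.notMem_support_iff] at hma
            rw [hma]; rfl
        rcases hzero with h | h
        · rw [← ham] at h
          rw [h, zero_mul, zero_mul]
          exact N.zero_mem
        · rw [h, mul_zero, zero_mul]
          exact N.zero_mem
  have hv0 : (decompose 𝒜 v 0 : R) * am ∈ N := key (t + 1) 0 (by omega)
  -- degree-0 equation
  have hdeg0 : (decompose 𝒜 v 0 : R) =
      1 + (decompose 𝒜 a 0 : R) * (decompose 𝒜 v 0 : R) := by
    conv_lhs => rw [hveq]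
    rw [DirectSum.decompose_add, DirectSum.add_apply, hone, DirectSum.of_eq_same]
    push_cast
    congr 1
    rw [hmul 0]
    have hsub : ((decompose 𝒜 a).support ×ˢ (decompose 𝒜 v).support).filter
        (fun ij : ℕ × ℕ => ij.1 + ij.2 = 0) ⊆ {((0 : ℕ), (0 : ℕ))} := by
      intro ij hij
      rw [Finset.mem_filter] at hij
      rw [Finset.mem_singleton]
      have h0 := hij.2
      exact Prod.ext (by omega) (by omega)
    rw [Finset.sum_subset hsub]
    · rw [Finset.sum_singleton]
    · intro x hx hnx
      rw [Finset.mem_singleton] at hx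
      subst hx
      rw [Finset.mem_filter, Finset.mem_product] at hnx
      push_neg at hnx
      rcases Decidable.em ((0:ℕ) ∈ (decompose 𝒜 a).support) with hma | hma
      · rcases Decidable.em ((0:ℕ) ∈ (decompose 𝒜 v).support) with hnv | hnv
        · exact absurd rfl (hnx ⟨hma, hnv⟩)
        · rw [DFinsupp.notMem_support_iff] at hnv
          rw [hnv]
          simp
      · rw [DFinsupp.notMem_support_iff] at hma
        rw [hma]
        simp
  have h1eq : (1 : R) = (decompose 𝒜 v 0 : R) -
      (decompose 𝒜 a 0 : R) * (decompose 𝒜 v 0 : R) :=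
    eq_sub_of_add_eq hdeg0.symm
  have hfinal : am = (decompose 𝒜 v 0 : R) * am -
      (decompose 𝒜 a 0 : R) * ((decompose 𝒜 v 0 : R) * am) := by
    conv_lhs => rw [← one_mul am, h1eq]
    rw [sub_mul, mul_assoc]
  rw [hfinal]
  exact N.sub_mem hv0 (N.mul_mem_left _ _ hv0)

/-- Main induction: any element of the Jacobson radical with support bounded by `b`
lies in the upper nilradical. -/
lemma main_ind (hNI : IsNIRing R)
    (hnil : ∀ x ∈ jacobsonRad R, x ∈ 𝒜 0 → IsNilpotent x) :
    ∀ b : ℕ, ∀ a : R, a ∈ jacobsonRad R → (∀ j, b < j → decompose 𝒜 a j = 0) →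
      a ∈ upperNilradical R := by
  intro b
  induction b with
  | zero =>
    intro a ha hsupp
    have hmem : a ∈ 𝒜 0 := by
      have hof : decompose 𝒜 a = DirectSum.of (fun i => 𝒜 i) 0 (decompose 𝒜 a 0) := by
        refine DFinsupp.ext fun j => ?_
        rcases Nat.eq_zero_or_pos j with rfl | hj
        · rw [DirectSum.of_eq_same]
        · rw [DirectSum.of_eq_of_ne _ _ _ (by omega), hsupp j (by omega)]
      have h2 := congrArg (DirectSum.decompose 𝒜).symm hof
      rw [Equiv.symm_apply_apply, DirectSum.decompose_symm_of] at h2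
      rw [h2]
      exact (decompose 𝒜 a 0).2
    rw [mem_uN_iff hNI]
    exact hnil a ha hmem
  | succ n ih =>
    intro a ha hsupp
    have hamN : (decompose 𝒜 a (n + 1) : R) ∈ upperNilradical R :=
      crux 𝒜 hNI ha (n + 1) (by omega) hsupp
    have hamJ : (decompose 𝒜 a (n + 1) : R) ∈ jacobsonRad R :=
      nilpotent_mem_jacobson hNI ((mem_uN_iff hNI _).1 hamN)
    have ha' : a - (decompose 𝒜 a (n + 1) : R) ∈ jacobsonRad R :=
      Ideal.sub_mem _ ha hamJ
    have hsupp' : ∀ j, n < j → decompose 𝒜 (a - (decompose 𝒜 a (n + 1) : R)) j = 0 := by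
      intro j hj
      rw [DirectSum.decompose_sub, DirectSum.sub_apply, DirectSum.decompose_coe]
      rcases eq_or_ne j (n + 1) with rfl | hne
      · rw [DirectSum.of_eq_same, sub_self]
      · rw [DirectSum.of_eq_of_ne _ _ _ hne, hsupp j (by omega), sub_zero]
    have h' := ih _ ha' hsupp'
    have hsplit : a = (a - (decompose 𝒜 a (n + 1) : R)) + (decompose 𝒜 a (n + 1) : R) := by
      rw [sub_add_cancel]
    rw [hsplit]
    exact (upperNilradical R).add_mem h' hamN

end Aux

/-- If `R = ⊕ Rₙ` is an `ℕ`-graded ring which is NI and `J(R) ∩ R₀` is nil,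
then `R` is NJ: `J(R) = N(R)`. -/
theorem graded_NI_isNJ (R : Type*) [Ring R] (𝒜 : ℕ → AddSubgroup R)
    [GradedRing 𝒜] (hNI : IsNIRing R)
    (hnil : ∀ x ∈ jacobsonRad R, x ∈ 𝒜 0 → IsNilpotent x) :
    (jacobsonRad R : Set R) = nilSet R := by
  classical
  ext x
  simp only [SetLike.mem_coe, nilSet, Set.mem_setOf_eq]
  constructor
  · intro hx
    have hsupp : ∀ j, (DirectSum.decompose 𝒜 x).support.sup id < j →
        DirectSum.decompose 𝒜 x j = 0 := by
      intro j hj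
      by_contra h
      have hmem : j ∈ (DirectSum.decompose 𝒜 x).support := DFinsupp.mem_support_iff.mpr h
      have := Finset.le_sup (f := id) hmem
      simp only [id] at this
      omega
    exact (mem_uN_iff hNI x).1
      (main_ind 𝒜 hNI hnil ((DirectSum.decompose 𝒜 x).support.sup id) x hx hsupp)
  · exact fun h => nilpotent_mem_jacobson hNI h
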